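/- Let Γ be a good pointclass such that every subset of [ℕ]^ω belonging to Γ has the Ramsey property. Then every proper filter on ℕ that belongs to Γ (as a subset of P(ℕ) ≅ 2^ℕ) is meager; equivalently, every proper ideal on ℕ belonging to Γ is meager. -/

import Mathlib

open Set

open Classical in
/-- The characteristic function of a set, viewed as a point of the Cantor space `α → Bool`. -/
noncomputable def chi {α : Type} (s : Set α) : α → Bool :=
  fun a => if a ∈ s then true else false
/-- A *good pointclass*: a collection of subsets of Polish spaces containing all clopen
sets and closed under countable intersections, countable unions, finite products,
continuous images, and continuous preimages. -/
structure GoodPointclass : Type 1 where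
  mem : ∀ (X : Type) [TopologicalSpace X], Set (Set X)
  clopen_mem : ∀ (X : Type) [TopologicalSpace X] [PolishSpace X] (s : Set X),
    IsClopen s → s ∈ mem X
  iInter_mem : ∀ (X : Type) [TopologicalSpace X] [PolishSpace X] (s : ℕ → Set X),
    (∀ n, s n ∈ mem X) → (⋂ n, s n) ∈ mem X
  iUnion_mem : ∀ (X : Type) [TopologicalSpace X] [PolishSpace X] (s : ℕ → Set X),
    (∀ n, s n ∈ mem X) → (⋃ n, s n) ∈ mem X
  prod_mem : ∀ (X Y : Type) [TopologicalSpace X] [PolishSpace X]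
    [TopologicalSpace Y] [PolishSpace Y] (s : Set X) (t : Set Y),
    s ∈ mem X → t ∈ mem Y → s ×ˢ t ∈ mem (X × Y)
  image_mem : ∀ (X Y : Type) [TopologicalSpace X] [PolishSpace X]
    [TopologicalSpace Y] [PolishSpace Y] (f : X → Y) (s : Set X),
    Continuous f → s ∈ mem X → f '' s ∈ mem Y
  preimage_mem : ∀ (X Y : Type) [TopologicalSpace X] [PolishSpace X]
    [TopologicalSpace Y] [PolishSpace Y] (f : X → Y) (t : Set Y),
    Continuous f → t ∈ mem Y → f ⁻¹' t ∈ mem X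
/-- A set `X ⊆ [ℕ]^ω` has the Ramsey property: there is an infinite `H ⊆ ℕ` with
`[H]^ω ⊆ X` or `[H]^ω ∩ X = ∅`. -/
def RamseyProp (X : Set (Set ℕ)) : Prop :=
  ∃ H : Set ℕ, H.Infinite ∧
    ((∀ y : Set ℕ, y.Infinite → y ⊆ H → y ∈ X) ∨
     (∀ y : Set ℕ, y.Infinite → y ⊆ H → y ∉ X))
/-- A proper ideal on `ℕ`: contains `∅` and all finite sets, not `ℕ`,
closed under subsets and finite unions. -/
def IsProperIdeal (I : Set (Set ℕ)) : Prop :=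
  ∅ ∈ I ∧ (Set.univ : Set ℕ) ∉ I ∧
  (∀ A ∈ I, ∀ B : Set ℕ, B ⊆ A → B ∈ I) ∧
  (∀ A ∈ I, ∀ B ∈ I, A ∪ B ∈ I) ∧
  (∀ A : Set ℕ, A.Finite → A ∈ I)

/-- A proper filter on `ℕ`: the pointwise complements form a proper ideal. -/
def IsProperFilter (F : Set (Set ℕ)) : Prop :=
  IsProperIdeal (compl '' F)


lemma chi_eq_true {α : Type} {A : Set α} {j : α} : chi A j = true ↔ j ∈ A := by
  unfold chi; split <;> simp_all

lemma chi_injective {α : Type} : Function.Injective (chi (α := α)) := by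
  intro A B h
  ext j
  rw [← chi_eq_true (A := A), ← chi_eq_true (A := B), h]

lemma chi_surjective {α : Type} : Function.Surjective (chi (α := α)) := by
  intro f
  refine ⟨{n | f n = true}, funext fun n => ?_⟩
  unfold chi; split <;> simp_all

/-- number of `true`s among `f 0, ..., f m`. -/
def cntF (f : ℕ → Bool) (m : ℕ) : ℕ :=
  ((Finset.range (m + 1)).filter (fun j => f j = true)).card

lemma cntF_fin (f : ℕ → Bool) (m : ℕ) :
    cntF f m = (Finset.univ.filter (fun i : Fin (m + 1) => f i = true)).card := by
  rw [cntF, Finset.card_filter, Finset.card_filter, ← Fin.sum_univ_eq_sum_range]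

lemma continuous_comp_fin (m : ℕ) :
    Continuous (fun f : ℕ → Bool => fun i : Fin (m + 1) => f i) :=
  continuous_pi fun i => continuous_apply (i : ℕ)

/-- the "alternating union" map on Cantor space. -/
def phi (f : ℕ → Bool) : ℕ → Bool := fun m => decide (Odd (cntF f m))

lemma phi_continuous : Continuous phi := by
  refine continuous_pi fun m => ?_
  have : (fun f : ℕ → Bool => phi f m) =
      (fun v : Fin (m + 1) → Bool =>
        decide (Odd ((Finset.univ.filter (fun i : Fin (m + 1) => v i = true)).card))) ∘
      (fun f : ℕ → Bool => fun i : Fin (m + 1) => f i) := by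
    funext f
    simp only [Function.comp, phi, cntF_fin]
  rw [this]
  exact continuous_of_discreteTopology.comp (continuous_comp_fin m)

noncomputable def psi (A : Set ℕ) : Set ℕ := {m | Odd (cntF (chi A) m)}

lemma chi_psi (A : Set ℕ) : chi (psi A) = phi (chi A) := by
  funext m
  by_cases hc : Odd (cntF (chi A) m) <;> simp [chi, psi, phi, hc]

open Classical in
lemma cnt_between {a : ℕ → ℕ} (ha : StrictMono a) {i n : ℕ} (h1 : a i ≤ n)
    (h2 : n < a (i + 1)) : cntF (chi (Set.range a)) n = i + 1 := by
  have : (Finset.range (n + 1)).filter (fun j => chi (Set.range a) j = true)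
      = (Finset.range (i + 1)).image a := by
    ext j
    simp only [Finset.mem_filter, Finset.mem_range, Finset.mem_image, chi_eq_true,
      Set.mem_range]
    constructor
    · rintro ⟨hj, t, rfl⟩
      refine ⟨t, ?_, rfl⟩
      by_contra ht
      push_neg at ht
      have := ha.monotone ht
      omega
    · rintro ⟨t, ht, rfl⟩
      exact ⟨by have := ha.monotone (by omega : t ≤ i); omega, t, rfl⟩
  rw [cntF, this, Finset.card_image_of_injective _ ha.injective, Finset.card_range]

lemma cnt_zero {a : ℕ → ℕ} {n : ℕ} (h : n < a 0) (ha : Monotone a) :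
    cntF (chi (Set.range a)) n = 0 := by
  rw [cntF, Finset.card_eq_zero, Finset.filter_eq_empty_iff]
  intro j hj
  rw [chi_eq_true]
  rintro ⟨t, rfl⟩
  have := ha (Nat.zero_le t)
  simp only [Finset.mem_range] at hj
  omega

lemma exists_between_nat {a : ℕ → ℕ} (ha : StrictMono a) {n : ℕ} (h : a 0 ≤ n) :
    ∃ i, a i ≤ n ∧ n < a (i + 1) := by
  classical
  set P : ℕ → Prop := fun i => a i ≤ n with hP
  set i := Nat.findGreatest P n with hidef
  have hspec : P i := Nat.findGreatest_spec (m := 0) (Nat.zero_le n) h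
  have hup : n < a (i + 1) := by
    by_cases hin : i + 1 ≤ n
    · have hg := Nat.findGreatest_is_greatest (k := i + 1) (P := P) (by omega) hin
      simp only [hP] at hg
      omega
    · have := ha.le_apply (x := i + 1)
      omega
  exact ⟨i, hspec, hup⟩

lemma odd_cnt_iff {a : ℕ → ℕ} (ha : StrictMono a) {n : ℕ} :
    Odd (cntF (chi (Set.range a)) n) ↔ ∃ i, a (2 * i) ≤ n ∧ n < a (2 * i + 1) := by
  constructor
  · intro hodd
    by_cases h0 : a 0 ≤ n
    · obtain ⟨i, hi1, hi2⟩ := exists_between_nat ha h0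
      rw [cnt_between ha hi1 hi2] at hodd
      have : Even i := by
        rcases Nat.even_or_odd i with he | ho
        · exact he
        · exfalso; rw [Nat.odd_iff] at ho; rw [Nat.odd_iff] at hodd; omega
      obtain ⟨t, rfl⟩ := this
      exact ⟨t, by rw [(by omega : 2 * t = t + t)]; exact hi1,
        by rw [(by omega : 2 * t + 1 = t + t + 1)]; exact hi2⟩
    · rw [cnt_zero (by omega) ha.monotone] at hodd
      simp [Nat.odd_iff] at hodd
  · rintro ⟨i, hi1, hi2⟩
    rw [cnt_between ha hi1 hi2]
    exact ⟨i, by omega⟩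

section FilterLemmas

variable {F : Set (Set ℕ)} (hF : IsProperIdeal (compl '' F))

lemma flt_superset (hF : IsProperIdeal (compl '' F)) {B C : Set ℕ} (hB : B ∈ F) (hBC : B ⊆ C) :
    C ∈ F := by
  have h1 : Bᶜ ∈ compl '' F := ⟨B, hB, rfl⟩
  have h2 : Cᶜ ∈ compl '' F := hF.2.2.1 _ h1 _ (compl_subset_compl.2 hBC)
  obtain ⟨D, hD, hDC⟩ := h2
  rwa [← compl_injective hDC]

lemma flt_not_disjoint (hF : IsProperIdeal (compl '' F)) {B C : Set ℕ} (hB : B ∈ F)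
    (hC : C ∈ F) (hd : B ∩ C = ∅) : False := by
  have h1 : Bᶜ ∪ Cᶜ ∈ compl '' F := hF.2.2.2.1 _ ⟨B, hB, rfl⟩ _ ⟨C, hC, rfl⟩
  rw [← compl_inter, hd, compl_empty] at h1
  exact hF.2.1 h1

lemma flt_cofinite (hF : IsProperIdeal (compl '' F)) {S : Set ℕ} (hS : S.Finite) : Sᶜ ∈ F := by
  have h1 : S ∈ compl '' F := hF.2.2.2.2 _ hS
  obtain ⟨D, hD, hDS⟩ := h1
  have : D = Sᶜ := by rw [← hDS, compl_compl]
  rwa [this] at hD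

lemma flt_inter (hF : IsProperIdeal (compl '' F)) {B C : Set ℕ} (hB : B ∈ F) (hC : C ∈ F) :
    B ∩ C ∈ F := by
  have h1 : Bᶜ ∪ Cᶜ ∈ compl '' F := hF.2.2.2.1 _ ⟨B, hB, rfl⟩ _ ⟨C, hC, rfl⟩
  rw [← compl_inter] at h1
  obtain ⟨D, hD, hDS⟩ := h1
  rwa [← compl_injective hDS]

end FilterLemmas

/-- the alternating sequence built from the enumeration `h` of the homogeneous set
and the selection `k` of empty blocks. -/
def aSeq (h k : ℕ → ℕ) : ℕ → ℕ := fun n =>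
  if n = 0 then h 0 else if n % 2 = 1 then h (k ((n - 1) / 2)) else h (k (n / 2 - 1) + 1)

lemma aSeq_zero (h k : ℕ → ℕ) : aSeq h k 0 = h 0 := rfl

lemma aSeq_odd (h k : ℕ → ℕ) (i : ℕ) : aSeq h k (2 * i + 1) = h (k i) := by
  unfold aSeq
  rw [if_neg (by omega), if_pos (by omega), (by omega : (2 * i + 1 - 1) / 2 = i)]

lemma aSeq_even (h k : ℕ → ℕ) (i : ℕ) : aSeq h k (2 * i + 2) = h (k i + 1) := by
  unfold aSeq
  rw [if_neg (by omega), if_neg (by omega), (by omega : (2 * i + 2) / 2 - 1 = i)]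

lemma aSeq_strictMono {h k : ℕ → ℕ} (hh : StrictMono h) (hk0 : 1 ≤ k 0)
    (hks : ∀ i, k i + 2 ≤ k (i + 1)) : StrictMono (aSeq h k) := by
  apply strictMono_nat_of_lt_succ
  intro n
  rcases Nat.even_or_odd n with ⟨i, hi⟩ | ⟨i, hi⟩
  · rcases Nat.eq_zero_or_pos i with rfl | hpos
    · have hn0 : n = 0 := by omega
      subst hn0
      show aSeq h k 0 < aSeq h k (2 * 0 + 1)
      rw [aSeq_zero, aSeq_odd]
      exact hh (by omega)
    · obtain ⟨j, rfl⟩ : ∃ j, i = j + 1 := ⟨i - 1, by omega⟩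
      have h1 : n = 2 * j + 2 := by omega
      subst h1
      show aSeq h k (2 * j + 2) < aSeq h k (2 * (j + 1) + 1)
      rw [aSeq_even, aSeq_odd]
      exact hh (by have := hks j; omega)
  · have h1 : n = 2 * i + 1 := by omega
    subst h1
    show aSeq h k (2 * i + 1) < aSeq h k (2 * i + 2)
    rw [aSeq_odd, aSeq_even]
    exact hh (by omega)

/-- `psi` of the even-shifted and odd-shifted enumerations are disjoint. -/
lemma psi_disjoint {a : ℕ → ℕ} (ha : StrictMono a) :
    psi (Set.range a) ∩ psi (Set.range (fun t => a (t + 1))) = ∅ := by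
  ext m
  simp only [Set.mem_inter_iff, Set.mem_empty_iff_false, iff_false, not_and]
  intro h1 h2
  have hb : StrictMono (fun t => a (t + 1)) := fun s t hst => ha (by omega)
  rw [psi, Set.mem_setOf_eq, odd_cnt_iff ha] at h1
  rw [psi, Set.mem_setOf_eq, odd_cnt_iff hb] at h2
  obtain ⟨i, hi1, hi2⟩ := h1
  obtain ⟨j, hj1, hj2⟩ := h2
  have hj1' : a (2 * j + 1) ≤ m := hj1
  have hj2' : m < a (2 * j + 1 + 1) := hj2
  -- intervals [a (2i), a (2i+1)) and [a (2j+1), a (2j+2)) are disjoint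
  rcases lt_or_ge (2 * i) (2 * j + 1) with hc | hc
  · have := ha.monotone (show 2 * i + 1 ≤ 2 * j + 1 by omega)
    omega
  · have := ha.monotone (show 2 * j + 1 + 1 ≤ 2 * i by omega)
    omega

/-- characterization of `chi`-image of the infinite sets. -/
lemma chi_image_infinite :
    chi '' {A : Set ℕ | A.Infinite} = ⋂ k, ⋃ n, {f : ℕ → Bool | f (n + k) = true} := by
  ext f
  obtain ⟨A, rfl⟩ := chi_surjective f
  simp only [Set.mem_image, Set.mem_iInter, Set.mem_iUnion, Set.mem_setOf_eq]
  constructor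
  · rintro ⟨B, hB, hBA⟩ k
    have hA : A.Infinite := by rwa [chi_injective hBA] at hB
    obtain ⟨m, hm1, hm2⟩ := hA.exists_gt k
    exact ⟨m - k, by rw [(by omega : m - k + k = m)]; exact chi_eq_true.2 hm1⟩
  · intro hk
    refine ⟨A, ?_, rfl⟩
    apply Set.infinite_of_not_bddAbove
    rintro ⟨b, hb⟩
    obtain ⟨n, hn⟩ := hk (b + 1)
    have : n + (b + 1) ∈ A := chi_eq_true.1 hn
    have := hb this
    omega

/-- The set of `f` hitting every block `[h k, h (k+1))` for `k ≥ m`. -/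
def blockSet (h : ℕ → ℕ) (m : ℕ) : Set (ℕ → Bool) :=
  {f | ∀ k, m ≤ k → ∃ j, h k ≤ j ∧ j < h (k + 1) ∧ f j = true}

lemma blockSet_closed (h : ℕ → ℕ) (m : ℕ) : IsClosed (blockSet h m) := by
  have : blockSet h m = ⋂ k, {f : ℕ → Bool | m ≤ k → ∃ j, h k ≤ j ∧ j < h (k + 1) ∧ f j = true} := by
    ext f; simp [blockSet]
  rw [this]
  refine isClosed_iInter fun k => ?_
  by_cases hk : m ≤ k
  · have : {f : ℕ → Bool | m ≤ k → ∃ j, h k ≤ j ∧ j < h (k + 1) ∧ f j = true}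
        = ⋃ j ∈ Finset.Ico (h k) (h (k + 1)), {f : ℕ → Bool | f j = true} := by
      ext f
      simp only [Set.mem_setOf_eq, Set.mem_iUnion, Finset.mem_Ico, exists_prop]
      constructor
      · rintro hf
        obtain ⟨j, h1, h2, h3⟩ := hf hk
        exact ⟨j, ⟨h1, h2⟩, h3⟩
      · rintro ⟨j, ⟨h1, h2⟩, h3⟩ _
        exact ⟨j, h1, h2, h3⟩
    rw [this]
    apply Set.Finite.isClosed_biUnion (Finset.Ico (h k) (h (k + 1))).finite_toSet
    intro j _
    have he : {f : ℕ → Bool | f j = true} = (fun f : ℕ → Bool => f j) ⁻¹' {true} := rfl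
    rw [he]
    exact (isClosed_discrete ({true} : Set Bool)).preimage (continuous_apply j)
  · have : {f : ℕ → Bool | m ≤ k → ∃ j, h k ≤ j ∧ j < h (k + 1) ∧ f j = true} = Set.univ := by
      ext f; simp [hk]
    rw [this]
    exact isClosed_univ

lemma blockSet_nowhereDense {h : ℕ → ℕ} (hh : StrictMono h) (m : ℕ) :
    IsNowhereDense (blockSet h m) := by
  rw [(blockSet_closed h m).isNowhereDense_iff]
  rw [Set.eq_empty_iff_forall_notMem]
  intro f hf
  have hop : IsOpen (interior (blockSet h m)) := isOpen_interior
  rw [isOpen_pi_iff] at hop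
  obtain ⟨I, u, hu, hsub⟩ := hop f hf
  -- pick a block beyond everything in I
  set N := I.sup id with hN
  set k := m + N + 1 with hk
  classical
  set g : ℕ → Bool := fun j => if j ∈ I then f j else false with hg
  have hgI : g ∈ (I : Set ℕ).pi u := by
    intro a ha
    simp only [hg, Finset.mem_coe.1 ha, if_pos (Finset.mem_coe.1 ha)]
    exact (hu a (Finset.mem_coe.1 ha)).2
  have hgD : g ∈ blockSet h m := interior_subset (hsub hgI)
  obtain ⟨j, hj1, hj2, hj3⟩ := hgD k (by omega)
  have hjI : j ∉ I := by
    intro hjI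
    have : j ≤ N := Finset.le_sup (f := id) hjI
    have : k ≤ h k := hh.le_apply
    omega
  rw [hg] at hj3
  simp only [if_neg hjI] at hj3
  exact Bool.false_ne_true hj3

/-- pointwise negation on Cantor space as a homeomorphism. -/
def negHomeo : (ℕ → Bool) ≃ₜ (ℕ → Bool) where
  toFun f := fun n => !(f n)
  invFun f := fun n => !(f n)
  left_inv f := by funext n; simp
  right_inv f := by funext n; simp
  continuous_toFun := by continuity
  continuous_invFun := by continuity

lemma chi_compl (A : Set ℕ) : chi Aᶜ = negHomeo (chi A) := by
  funext n
  by_cases hn : n ∈ A <;> simp [chi, negHomeo, hn]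

instance instPolishSpaceNatBool : PolishSpace (ℕ → Bool) :=
  have : TopologicalSpace.SeparableSpace (ℕ → Bool) := inferInstance
  have : TopologicalSpace.IsCompletelyMetrizableSpace (ℕ → Bool) := inferInstance
  inferInstance

theorem filters_and_ideals_in_ramsey_pointclass_are_meager (Γ : GoodPointclass)
    (hRamsey : ∀ X : Set (Set ℕ), (∀ x ∈ X, x.Infinite) →
      chi '' X ∈ Γ.mem (ℕ → Bool) → RamseyProp X) :
    (∀ F : Set (Set ℕ), IsProperFilter F → chi '' F ∈ Γ.mem (ℕ → Bool) →
        IsMeagre (chi '' F : Set (ℕ → Bool))) ∧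
    (∀ I : Set (Set ℕ), IsProperIdeal I → chi '' I ∈ Γ.mem (ℕ → Bool) →
        IsMeagre (chi '' I : Set (ℕ → Bool))) := by
  have negneg : ∀ f : ℕ → Bool, negHomeo (negHomeo f) = f := fun f => by
    funext n; simp [negHomeo]
  have hpair : ∀ (S T : Set (ℕ → Bool)), S ∈ Γ.mem (ℕ → Bool) → T ∈ Γ.mem (ℕ → Bool) →
      S ∩ T ∈ Γ.mem (ℕ → Bool) := by
    intro S T hS hT
    have heq : S ∩ T = ⋂ n : ℕ, (fun n => if n = 0 then S else T) n := by
      ext x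
      simp only [Set.mem_iInter, Set.mem_inter_iff]
      constructor
      · rintro ⟨h1, h2⟩ n
        by_cases hn : n = 0 <;> simp [hn, h1, h2]
      · intro hall
        refine ⟨by simpa using hall 0, by simpa using hall 1⟩
    rw [heq]
    apply Γ.iInter_mem
    intro n
    by_cases hn : n = 0
    · simpa [hn] using hS
    · simpa [hn] using hT
  have main : ∀ F : Set (Set ℕ), IsProperFilter F → chi '' F ∈ Γ.mem (ℕ → Bool) →
      IsMeagre (chi '' F : Set (ℕ → Bool)) := by
    intro F hF hΓ
    have hFi : IsProperIdeal (compl '' F) := hF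
    set X : Set (Set ℕ) := {A : Set ℕ | A.Infinite ∧ psi A ∈ F} with hX
    have hXinf : ∀ x ∈ X, x.Infinite := fun x hx => hx.1
    have hXchi : chi '' X =
        (⋂ k, ⋃ n, {f : ℕ → Bool | f (n + k) = true}) ∩ phi ⁻¹' (chi '' F) := by
      ext f
      constructor
      · rintro ⟨A, ⟨hA1, hA2⟩, rfl⟩
        refine ⟨?_, ?_⟩
        · rw [← chi_image_infinite]
          exact ⟨A, hA1, rfl⟩
        · rw [Set.mem_preimage, ← chi_psi]
          exact ⟨psi A, hA2, rfl⟩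
      · rintro ⟨h1, h2⟩
        rw [← chi_image_infinite] at h1
        obtain ⟨A, hA, rfl⟩ := h1
        rw [Set.mem_preimage, ← chi_psi] at h2
        obtain ⟨C, hC, hCpsi⟩ := h2
        rw [chi_injective hCpsi] at hC
        exact ⟨A, ⟨hA, hC⟩, rfl⟩
    have hXΓ : chi '' X ∈ Γ.mem (ℕ → Bool) := by
      rw [hXchi]
      refine hpair _ _ ?_ (Γ.preimage_mem _ _ phi (chi '' F) phi_continuous hΓ)
      apply Γ.iInter_mem
      intro k
      apply Γ.iUnion_mem
      intro n
      apply Γ.clopen_mem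
      have he : {f : ℕ → Bool | f (n + k) = true}
          = (fun f : ℕ → Bool => f (n + k)) ⁻¹' {true} := rfl
      rw [he]
      exact (isClopen_discrete ({true} : Set Bool)).preimage (continuous_apply (n + k))
    obtain ⟨H, hHinf, hcase⟩ := hRamsey X hXinf hXΓ
    have hHinf' : {n : ℕ | n ∈ H}.Infinite := hHinf
    set h : ℕ → ℕ := Nat.nth (· ∈ H) with hhdef
    have hh : StrictMono h := Nat.nth_strictMono hHinf'
    have hhH : ∀ n, h n ∈ H := fun n => Nat.nth_mem_of_infinite hHinf' n
    rcases hcase with hpos | hneg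
    · exfalso
      have hA1 : (Set.range h).Infinite := Set.infinite_range_of_injective hh.injective
      have hA2 : Set.range h ⊆ H := by rintro x ⟨n, rfl⟩; exact hhH n
      have hb : StrictMono (fun t => h (t + 1)) := fun s t hst => hh (by omega)
      have hB1 : (Set.range fun t => h (t + 1)).Infinite :=
        Set.infinite_range_of_injective hb.injective
      have hB2 : (Set.range fun t => h (t + 1)) ⊆ H := by rintro x ⟨n, rfl⟩; exact hhH (n + 1)
      have h1 : psi (Set.range h) ∈ F := (hpos _ hA1 hA2).2
      have h2 : psi (Set.range fun t => h (t + 1)) ∈ F := (hpos _ hB1 hB2).2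
      exact flt_not_disjoint hFi h1 h2 (psi_disjoint hh)
    · rw [isMeagre_iff_countable_union_isNowhereDense]
      refine ⟨Set.range (blockSet h), ?_, Set.countable_range _, ?_⟩
      · rintro t ⟨m, rfl⟩
        exact blockSet_nowhereDense hh m
      · rintro x ⟨B, hB, rfl⟩
        rw [Set.mem_sUnion]
        by_contra hcon
        push_neg at hcon
        have hbad : ∀ m, ∃ k, m ≤ k ∧ ∀ j, h k ≤ j → j < h (k + 1) → j ∉ B := by
          intro m
          have hm := hcon (blockSet h m) ⟨m, rfl⟩
          simp only [blockSet, Set.mem_setOf_eq, not_forall] at hm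
          obtain ⟨k, hk⟩ := hm
          push_neg at hk
          obtain ⟨hk1, hk2⟩ := hk
          refine ⟨k, hk1, fun j hj1 hj2 hjB => ?_⟩
          exact hk2 j hj1 hj2 (chi_eq_true.2 hjB)
        choose K hK1 hK2 using hbad
        set kseq : ℕ → ℕ := fun i => Nat.rec (K 1) (fun _ prev => K (prev + 2)) i with hkseq
        have hk1 : 1 ≤ kseq 0 := hK1 1
        have hks : ∀ i, kseq i + 2 ≤ kseq (i + 1) := fun i => hK1 (kseq i + 2)
        have hkempty : ∀ i, ∀ j, h (kseq i) ≤ j → j < h (kseq i + 1) → j ∉ B := by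
          intro i
          cases i with
          | zero => exact hK2 1
          | succ n => exact hK2 (kseq n + 2)
        have haS : StrictMono (aSeq h kseq) := aSeq_strictMono hh hk1 hks
        have hrange : Set.range (aSeq h kseq) ⊆ H := by
          rintro x ⟨n, rfl⟩
          unfold aSeq
          split_ifs <;> apply hhH
        have hrinf : (Set.range (aSeq h kseq)).Infinite :=
          Set.infinite_range_of_injective haS.injective
        have hpsi_not : psi (Set.range (aSeq h kseq)) ∉ F := fun hmem =>
          hneg _ hrinf hrange ⟨hrinf, hmem⟩
        have hBa0 : B ∩ {n : ℕ | n < aSeq h kseq 0}ᶜ ∈ F :=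
          flt_inter hFi hB (flt_cofinite hFi (Set.finite_lt_nat _))
        have hsubset : B ∩ {n : ℕ | n < aSeq h kseq 0}ᶜ ⊆ psi (Set.range (aSeq h kseq)) := by
          rintro n ⟨hnB, hn0⟩
          have ha0 : aSeq h kseq 0 ≤ n := not_lt.1 hn0
          rw [psi, Set.mem_setOf_eq, odd_cnt_iff haS]
          obtain ⟨i, hi1, hi2⟩ := exists_between_nat haS ha0
          rcases Nat.even_or_odd i with ⟨t, ht⟩ | ⟨t, ht⟩
          · refine ⟨t, ?_, ?_⟩
            · rw [show 2 * t = i by omega]; exact hi1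
            · rw [show 2 * t + 1 = i + 1 by omega]; exact hi2
          · exfalso
            rw [show i = 2 * t + 1 by omega, aSeq_odd] at hi1
            rw [show i + 1 = 2 * t + 2 by omega, aSeq_even] at hi2
            exact hkempty t n hi1 hi2 hnB
        exact hpsi_not (flt_superset hFi hBa0 hsubset)
  refine ⟨main, ?_⟩
  intro I hI hIΓ
  have hcc : compl '' (compl '' I) = I := by
    rw [Set.image_image]
    simp only [compl_compl, Set.image_id']
  have hFil : IsProperFilter (compl '' I) := by
    rw [IsProperFilter, hcc]
    exact hI
  have key : chi '' (compl '' I) = (negHomeo : (ℕ → Bool) ≃ₜ (ℕ → Bool)) ⁻¹' (chi '' I) := by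
    ext f
    constructor
    · rintro ⟨B, ⟨A, hA, rfl⟩, rfl⟩
      rw [Set.mem_preimage]
      refine ⟨A, hA, ?_⟩
      rw [chi_compl, negneg]
    · intro hf
      rw [Set.mem_preimage] at hf
      obtain ⟨A, hA, hAf⟩ := hf
      refine ⟨Aᶜ, ⟨A, hA, rfl⟩, ?_⟩
      rw [chi_compl, hAf]
      exact negneg f
  have hΓF : chi '' (compl '' I) ∈ Γ.mem (ℕ → Bool) := by
    rw [key]
    exact Γ.preimage_mem _ _ _ _ negHomeo.continuous hIΓ
  have hmeag := main _ hFil hΓF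
  have key2 : chi '' I = (negHomeo : (ℕ → Bool) ≃ₜ (ℕ → Bool)) ⁻¹' (chi '' (compl '' I)) := by
    rw [key]
    ext f
    simp only [Set.mem_preimage, negneg]
  rw [key2]
  exact hmeag.preimage_of_isOpenMap negHomeo.continuous negHomeo.isOpenMap
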